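/- Let A ⊆ ℕ be piecewise syndetic, m a positive integer, and d₁, ..., d_m, l₁, ..., l_m positive integers. Then there exist polynomials P₁, ..., P_m with positive integer coefficients and deg P_i = d_i such that P_i(j) ∈ A for all 1 ≤ i ≤ m and 1 ≤ j ≤ l_i. -/

import Mathlib

/-- `A ⊆ ℕ` is piecewise syndetic: a finite union of translates `A - t`, `t ∈ F`,
contains arbitrarily long intervals. -/
def PiecewiseSyndetic (A : Set ℕ) : Prop :=
  ∃ F : Finset ℕ, ∀ L : ℕ, ∃ a : ℕ, ∀ i < L, ∃ t ∈ F, a + i + t ∈ A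

/-- Van der Waerden for piecewise syndetic sets: a piecewise syndetic set contains
arbitrarily long arithmetic progressions. -/
lemma PiecewiseSyndetic.exists_ap {A : Set ℕ} (hA : PiecewiseSyndetic A) (N : ℕ) :
    ∃ b r : ℕ, 0 < r ∧ ∀ s ≤ N, b + r * s ∈ A := by
  classical
  obtain ⟨F, hF⟩ := hA
  choose base hbase using hF
  -- F is nonempty
  obtain ⟨t0, ht0, -⟩ := hbase 1 0 (by norm_num)
  -- coloring of positions for each length L
  set κ := {t // t ∈ F}
  have : Nonempty κ := ⟨⟨t0, ht0⟩⟩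
  let g : ℕ → ℕ → κ := fun L i =>
    if h : ∃ t ∈ F, base L + i + t ∈ A then ⟨h.choose, h.choose_spec.1⟩ else ⟨t0, ht0⟩
  have hg : ∀ L i, i < L → base L + i + (g L i : ℕ) ∈ A := by
    intro L i hiL
    have h : ∃ t ∈ F, base L + i + t ∈ A := hbase L i hiL
    simp only [g, dif_pos h]
    exact h.choose_spec.2
  -- limit coloring along an ultrafilter extending atTop
  obtain ⟨U, hU⟩ := Ultrafilter.exists_le (Filter.atTop : Filter ℕ)
  have hχ : ∀ i : ℕ, ∃ c : κ, ∀ᶠ L in (U : Filter ℕ), g L i = c := by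
    intro i
    by_contra h
    push_neg at h
    have h' : ∀ c : κ, ∀ᶠ L in (U : Filter ℕ), g L i ≠ c := by
      intro c
      exact h c
    have : ∀ᶠ L in (U : Filter ℕ), ∀ c : κ, g L i ≠ c := Filter.eventually_all.2 h'
    obtain ⟨L, hL⟩ := this.exists
    exact hL (g L i) rfl
  choose χ hχ using hχ
  -- monochromatic homothetic copy of {0, ..., N}
  obtain ⟨r, hr, b, c, hmono⟩ :=
    Combinatorics.exists_mono_homothetic_copy (Finset.range (N + 1)) χ
  -- find a single L that works for all positions simultaneously
  have hev : ∀ᶠ L in (U : Filter ℕ),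
      (∀ s ∈ Finset.range (N + 1), g L (r * s + b) = c) ∧ r * N + b < L := by
    refine Filter.Eventually.and ?_ ((Filter.eventually_gt_atTop (r * N + b)).filter_mono hU)
    refine (Filter.eventually_all_finset _).2 ?_
    intro s hs
    have := hχ (r * s + b)
    have hc : χ (r * s + b) = c := by
      have := hmono s hs
      simpa [smul_eq_mul] using this
    filter_upwards [hχ (r * s + b)] with L hL
    rw [hL, hc]
  obtain ⟨L, hL1, hL2⟩ := hev.exists
  refine ⟨base L + b + (c : ℕ), r, hr, ?_⟩
  intro s hs
  have hsmem : s ∈ Finset.range (N + 1) := Finset.mem_range.2 (Nat.lt_succ_of_le hs)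
  have hpos : r * s + b < L := lt_of_le_of_lt
    (by have : r * s ≤ r * N := Nat.mul_le_mul_left r hs; omega) hL2
  have := hg L (r * s + b) hpos
  rw [hL1 s hsmem] at this
  have heq : base L + (r * s + b) + (c : ℕ) = base L + b + (c : ℕ) + r * s := by ring
  rwa [heq] at this

/-- Multidimensional piecewise syndetic version: a piecewise syndetic set contains the
first `l i` values of polynomials `P i` of degree exactly `d i` with positive integer
coefficients, simultaneously for `i = 1, ..., m`. -/
theorem stmt_14 (A : Set ℕ) (hA : PiecewiseSyndetic A)
    (m : ℕ) (hm : 0 < m) (d l : Fin m → ℕ)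
    (hd : ∀ i, 0 < d i) (hl : ∀ i, 0 < l i) :
    ∃ a : Fin m → ℕ → ℕ,
      (∀ i, ∀ k ≤ d i, 0 < a i k) ∧
      ∀ i, ∀ j, 1 ≤ j → j ≤ l i →
        (∑ k ∈ Finset.range (d i + 1), a i k * j ^ k) ∈ A := by
  classical
  set N : ℕ := Finset.univ.sup (fun i : Fin m => ∑ k ∈ Finset.range (d i + 1), (l i) ^ k) with hN
  obtain ⟨b, r, hr, hAP⟩ := hA.exists_ap N
  refine ⟨fun i k => if k = 0 then b + r else r, ?_, ?_⟩
  · intro i k _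
    dsimp only
    split <;> omega
  · intro i j hj1 hjl
    have hQle : (∑ k ∈ Finset.range (d i + 1), j ^ k) ≤ N := by
      calc (∑ k ∈ Finset.range (d i + 1), j ^ k)
          ≤ ∑ k ∈ Finset.range (d i + 1), (l i) ^ k :=
            Finset.sum_le_sum fun k _ => Nat.pow_le_pow_left hjl k
        _ ≤ N := by rw [hN]; exact Finset.le_sup (f := fun i : Fin m => ∑ k ∈ Finset.range (d i + 1), (l i) ^ k) (Finset.mem_univ i)
    have hsum : (∑ k ∈ Finset.range (d i + 1), (if k = 0 then b + r else r) * j ^ k)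
        = b + r * ∑ k ∈ Finset.range (d i + 1), j ^ k := by
      have : ∀ k ∈ Finset.range (d i + 1),
          (if k = 0 then b + r else r) * j ^ k = (if k = 0 then b else 0) + r * j ^ k := by
        intro k _
        split <;> simp [add_mul, *]
      rw [Finset.sum_congr rfl this, Finset.sum_add_distrib, ← Finset.mul_sum,
        Finset.sum_ite_eq' (Finset.range (d i + 1)) 0 (fun _ => b)]
      simp [Finset.mem_range]
    rw [hsum]
    exact hAP _ hQle
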